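/- For the Hénon map f(x,y) = (x² + c − ay, x), the limit G⁺(x,y) = lim 2^{-n} log⁺‖f^n(x,y)‖ exists for every (x,y) ∈ ℂ² with ‖(x,y)‖ sufficiently large (specifically when |x| ≥ R with R large depending on |a|, |c|, and |x| ≥ |y|), and in that region G⁺(x,y) = log|x| + o(1) as |x| → ∞. -/

import Mathlib

/-- The complex Hénon map `f(x,y) = (x² + c - a y, x)`. -/
def henon (a c : ℂ) : ℂ × ℂ → ℂ × ℂ := fun p => (p.1 ^ 2 + c - a * p.2, p.1)

namespace HenonAux

/-- One-step bounds on the first coordinate of the Hénon map. -/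
lemma step (a c x y : ℂ)
    (hx : 2 * (‖a‖ + ‖c‖) + 2 ≤ ‖x‖) (hy : ‖y‖ ≤ ‖x‖) :
    ‖x‖ ^ 2 - (‖a‖ + ‖c‖) * ‖x‖ ≤ ‖x ^ 2 + c - a * y‖ ∧
      ‖x ^ 2 + c - a * y‖ ≤ ‖x‖ ^ 2 + (‖a‖ + ‖c‖) * ‖x‖ := by
  have ha := norm_nonneg a
  have hc := norm_nonneg c
  have hy0 := norm_nonneg y
  have hx1 : (1 : ℝ) ≤ ‖x‖ := by nlinarith
  have h1 : ‖c - a * y‖ ≤ (‖a‖ + ‖c‖) * ‖x‖ := by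
    have h := norm_sub_le c (a * y)
    rw [norm_mul] at h
    nlinarith
  have heq : x ^ 2 + c - a * y = x ^ 2 + (c - a * y) := by ring
  constructor
  · have h3 := norm_add_le (x ^ 2 + (c - a * y)) (-(c - a * y))
    rw [add_neg_cancel_right, norm_neg, norm_pow] at h3
    rw [heq]
    linarith
  · have h3 := norm_add_le (x ^ 2) (c - a * y)
    rw [norm_pow] at h3
    rw [heq]
    linarith

/-- The region `V⁺` is invariant and the first coordinate grows. -/
lemma iter (a c : ℂ) (p : ℂ × ℂ) (hx : 2 * (‖a‖ + ‖c‖) + 2 ≤ ‖p.1‖)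
    (hy : ‖p.2‖ ≤ ‖p.1‖) (n : ℕ) :
    ‖p.1‖ ≤ ‖((henon a c)^[n] p).1‖ ∧
      ‖((henon a c)^[n] p).2‖ ≤ ‖((henon a c)^[n] p).1‖ := by
  induction n with
  | zero => exact ⟨le_refl _, hy⟩
  | succ n ih =>
    obtain ⟨h1, h2⟩ := ih
    rw [Function.iterate_succ_apply']
    set q := (henon a c)^[n] p with hqdef
    have hq : 2 * (‖a‖ + ‖c‖) + 2 ≤ ‖q.1‖ := le_trans hx h1
    have hs := step a c q.1 q.2 hq h2
    have ha := norm_nonneg a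
    have hc := norm_nonneg c
    have hfst : (henon a c q).1 = q.1 ^ 2 + c - a * q.2 := rfl
    have hsnd : (henon a c q).2 = q.1 := rfl
    have hgrow : ‖q.1‖ ≤ ‖q.1 ^ 2 + c - a * q.2‖ := by
      have : ‖q.1‖ ≤ ‖q.1‖ ^ 2 - (‖a‖ + ‖c‖) * ‖q.1‖ := by nlinarith
      linarith [hs.1]
    constructor
    · rw [hfst]; exact le_trans h1 hgrow
    · rw [hfst, hsnd]; exact hgrow

/-- Geometric bound on consecutive terms of `log‖xₙ‖ / 2ⁿ`. -/
lemma dist_bound (a c : ℂ) (p : ℂ × ℂ) (hx : 2 * (‖a‖ + ‖c‖) + 2 ≤ ‖p.1‖)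
    (hy : ‖p.2‖ ≤ ‖p.1‖) (n : ℕ) :
    dist (Real.log ‖((henon a c)^[n] p).1‖ / 2 ^ n)
        (Real.log ‖((henon a c)^[n + 1] p).1‖ / 2 ^ (n + 1))
      ≤ ((‖a‖ + ‖c‖) / ‖p.1‖) * (1 / 2) ^ n := by
  have ha := norm_nonneg a
  have hc := norm_nonneg c
  set A : ℝ := ‖a‖ + ‖c‖ with hAdef
  have hA0 : 0 ≤ A := by positivity
  obtain ⟨h1, h2⟩ := iter a c p hx hy n
  set q := (henon a c)^[n] p with hqdef
  have hp1 : (0 : ℝ) < ‖p.1‖ := by linarith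
  have hq1 : (0 : ℝ) < ‖q.1‖ := lt_of_lt_of_le hp1 h1
  have hq2A : 2 * A + 2 ≤ ‖q.1‖ := le_trans hx h1
  have hs := step a c q.1 q.2 hq2A h2
  rw [← hAdef] at hs
  have hx' : ((henon a c)^[n + 1] p).1 = q.1 ^ 2 + c - a * q.2 := by
    rw [Function.iterate_succ_apply', ← hqdef]; rfl
  set δ : ℝ := A / ‖p.1‖ with hδdef
  have hδ0 : 0 ≤ δ := by positivity
  have hδn : A / ‖q.1‖ ≤ δ := by
    rw [hδdef]; gcongr
  have hδq0 : 0 ≤ A / ‖q.1‖ := by positivity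
  have hδhalf : δ ≤ 1 / 2 := by
    rw [hδdef, div_le_iff₀ hp1]; nlinarith
  have hδqhalf : A / ‖q.1‖ ≤ 1 / 2 := le_trans hδn hδhalf
  -- positivity of the new first coordinate's norm
  have hnewpos : (0 : ℝ) < ‖q.1 ^ 2 + c - a * q.2‖ := by
    have : ‖q.1‖ ≤ ‖q.1‖ ^ 2 - A * ‖q.1‖ := by nlinarith
    linarith [hs.1]
  -- factorised bounds
  have key : ∀ t : ℝ, t ≠ 0 → t ^ 2 * (1 + A / t) = t ^ 2 + A * t ∧
      t ^ 2 * (1 - A / t) = t ^ 2 - A * t := by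
    intro t ht
    constructor <;> (field_simp)
  have hfac1 : ‖q.1‖ ^ 2 * (1 + A / ‖q.1‖) = ‖q.1‖ ^ 2 + A * ‖q.1‖ :=
    (key _ (ne_of_gt hq1)).1
  have hfac2 : ‖q.1‖ ^ 2 * (1 - A / ‖q.1‖) = ‖q.1‖ ^ 2 - A * ‖q.1‖ :=
    (key _ (ne_of_gt hq1)).2
  have hlogsplit : ∀ t : ℝ, 0 < t →
      Real.log (‖q.1‖ ^ 2 * t) = 2 * Real.log ‖q.1‖ + Real.log t := by
    intro t ht
    rw [Real.log_mul (by positivity) (ne_of_gt ht), Real.log_pow]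
    norm_num
  -- upper bound for log of new coordinate
  have hup : Real.log ‖q.1 ^ 2 + c - a * q.2‖ ≤ 2 * Real.log ‖q.1‖ + 2 * δ := by
    have h4 : Real.log ‖q.1 ^ 2 + c - a * q.2‖
        ≤ Real.log (‖q.1‖ ^ 2 * (1 + A / ‖q.1‖)) := by
      apply Real.log_le_log hnewpos
      rw [hfac1]; exact hs.2
    rw [hlogsplit _ (by linarith)] at h4
    have h5 : Real.log (1 + A / ‖q.1‖) ≤ A / ‖q.1‖ := by
      have := Real.log_le_sub_one_of_pos (show (0:ℝ) < 1 + A / ‖q.1‖ by linarith)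
      linarith
    linarith
  -- lower bound for log of new coordinate
  have hlow : 2 * Real.log ‖q.1‖ - 2 * δ ≤ Real.log ‖q.1 ^ 2 + c - a * q.2‖ := by
    have hposfac : (0 : ℝ) < ‖q.1‖ ^ 2 * (1 - A / ‖q.1‖) := by
      apply mul_pos (by positivity); linarith
    have h4 : Real.log (‖q.1‖ ^ 2 * (1 - A / ‖q.1‖))
        ≤ Real.log ‖q.1 ^ 2 + c - a * q.2‖ := by
      apply Real.log_le_log hposfac
      rw [hfac2]; exact hs.1
    rw [hlogsplit _ (by linarith)] at h4
    have h5 : -(2 * δ) ≤ Real.log (1 - A / ‖q.1‖) := by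
      have h1δ : (0:ℝ) < 1 - δ := by linarith
      have h6 : -(2 * δ) ≤ Real.log (1 - δ) := by
        rw [Real.le_log_iff_exp_le h1δ]
        have h7 : 2 * δ + 1 ≤ Real.exp (2 * δ) := Real.add_one_le_exp _
        have h8 : Real.exp (-(2 * δ)) = (Real.exp (2 * δ))⁻¹ := Real.exp_neg _
        have h9 : (Real.exp (2 * δ))⁻¹ ≤ (1 + 2 * δ)⁻¹ := by
          apply inv_anti₀ (by linarith); linarith
        have h10 : (1 + 2 * δ)⁻¹ ≤ 1 - δ := by
          rw [inv_eq_one_div, div_le_iff₀ (by linarith)]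
          nlinarith
        rw [h8]; linarith
      have h11 : Real.log (1 - δ) ≤ Real.log (1 - A / ‖q.1‖) := by
        apply Real.log_le_log h1δ; linarith
      linarith
    linarith
  -- assemble the distance estimate
  rw [hx', Real.dist_eq]
  have h2n : (0 : ℝ) < (2 : ℝ) ^ n := by positivity
  have h2n1 : (0 : ℝ) < (2 : ℝ) ^ (n + 1) := by positivity
  have hsplit : Real.log ‖q.1‖ / 2 ^ n - Real.log ‖q.1 ^ 2 + c - a * q.2‖ / 2 ^ (n + 1)
      = (2 * Real.log ‖q.1‖ - Real.log ‖q.1 ^ 2 + c - a * q.2‖) / 2 ^ (n + 1) := by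
    rw [pow_succ]; field_simp; ring
  rw [hsplit, abs_div, abs_of_pos h2n1]
  have hnum : |2 * Real.log ‖q.1‖ - Real.log ‖q.1 ^ 2 + c - a * q.2‖| ≤ 2 * δ := by
    rw [abs_le]; constructor <;> linarith
  calc |2 * Real.log ‖q.1‖ - Real.log ‖q.1 ^ 2 + c - a * q.2‖| / 2 ^ (n + 1)
      ≤ (2 * δ) / 2 ^ (n + 1) := by gcongr
    _ = δ * (1 / 2) ^ n := by rw [pow_succ]; field_simp; rw [mul_assoc, ← mul_pow]; norm_num

/-- The function in the statement agrees with `log‖xₙ‖/2ⁿ` on `V⁺`. -/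
lemma fn_eq (a c : ℂ) (p : ℂ × ℂ) (hx : 2 * (‖a‖ + ‖c‖) + 2 ≤ ‖p.1‖)
    (hy : ‖p.2‖ ≤ ‖p.1‖) :
    (fun n : ℕ => max (Real.log ‖(henon a c)^[n] p‖) 0 / 2 ^ n)
      = fun n : ℕ => Real.log ‖((henon a c)^[n] p).1‖ / 2 ^ n := by
  have ha := norm_nonneg a
  have hc := norm_nonneg c
  funext n
  obtain ⟨h1, h2⟩ := iter a c p hx hy n
  have hnorm : ‖(henon a c)^[n] p‖ = ‖((henon a c)^[n] p).1‖ := by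
    rw [Prod.norm_def]; exact sup_eq_left.mpr h2
  rw [hnorm, max_eq_left]
  apply Real.log_nonneg
  nlinarith

end HenonAux

/-- On the region `V⁺_R = {(x,y) : |x| ≥ max(|y|, R)}` with `R` large
(depending on `|a|`, `|c|`), the limit `G⁺(x,y) = lim 2⁻ⁿ log⁺‖fⁿ(x,y)‖`
exists, and `G⁺(x,y) = log|x| + o(1)` as `|x| → ∞` in this region. -/
theorem stmt_13 (a c : ℂ) (ha : a ≠ 0) :
    ∃ R : ℝ, 0 < R ∧
      (∀ p : ℂ × ℂ, R ≤ ‖p.1‖ → ‖p.2‖ ≤ ‖p.1‖ →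
        ∃ g : ℝ, Filter.Tendsto
          (fun n : ℕ => max (Real.log ‖(henon a c)^[n] p‖) 0 / 2 ^ n)
          Filter.atTop (nhds g)) ∧
      (∀ ε : ℝ, 0 < ε → ∃ R' : ℝ, R ≤ R' ∧
        ∀ p : ℂ × ℂ, R' ≤ ‖p.1‖ → ‖p.2‖ ≤ ‖p.1‖ →
          ∀ g : ℝ, Filter.Tendsto
            (fun n : ℕ => max (Real.log ‖(henon a c)^[n] p‖) 0 / 2 ^ n)
            Filter.atTop (nhds g) →
          |g - Real.log (‖p.1‖)| < ε) := by
  have haa := norm_nonneg a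
  have hcc := norm_nonneg c
  refine ⟨2 * (‖a‖ + ‖c‖) + 2, by positivity, ?_, ?_⟩
  · intro p hx hy
    obtain ⟨g, hg⟩ := cauchySeq_tendsto_of_complete
      (cauchySeq_of_le_geometric (1 / 2) ((‖a‖ + ‖c‖) / ‖p.1‖) (by norm_num)
        (HenonAux.dist_bound a c p hx hy))
    exact ⟨g, by rw [HenonAux.fn_eq a c p hx hy]; exact hg⟩
  · intro ε hε
    refine ⟨max (2 * (‖a‖ + ‖c‖) + 2) (4 * (‖a‖ + ‖c‖) / ε + 1), le_max_left _ _, ?_⟩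
    intro p hx' hy g hg
    have hx : 2 * (‖a‖ + ‖c‖) + 2 ≤ ‖p.1‖ := le_trans (le_max_left _ _) hx'
    have hpbig : 4 * (‖a‖ + ‖c‖) / ε + 1 ≤ ‖p.1‖ := le_trans (le_max_right _ _) hx'
    have hp0 : (0 : ℝ) < ‖p.1‖ := lt_of_lt_of_le (by positivity) hpbig
    rw [HenonAux.fn_eq a c p hx hy] at hg
    have hd := dist_le_of_le_geometric_of_tendsto₀ (1 / 2) ((‖a‖ + ‖c‖) / ‖p.1‖)
      (by norm_num) (HenonAux.dist_bound a c p hx hy) hg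
    have h0 : ((henon a c)^[0] p).1 = p.1 := rfl
    rw [h0] at hd
    have hd' : |g - Real.log ‖p.1‖| ≤ 2 * (‖a‖ + ‖c‖) / ‖p.1‖ := by
      rw [abs_sub_comm]
      have : Real.log ‖p.1‖ / 2 ^ (0:ℕ) = Real.log ‖p.1‖ := by norm_num
      rw [Real.dist_eq, this] at hd
      have heq : ((‖a‖ + ‖c‖) / ‖p.1‖) / (1 - 1 / 2) = 2 * (‖a‖ + ‖c‖) / ‖p.1‖ := by
        ring
      rw [heq] at hd
      exact hd
    have hfin : 2 * (‖a‖ + ‖c‖) / ‖p.1‖ < ε := by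
      rw [div_lt_iff₀ hp0]
      have hmul : ε * (4 * (‖a‖ + ‖c‖) / ε + 1) = 4 * (‖a‖ + ‖c‖) + ε := by
        field_simp
      nlinarith [mul_le_mul_of_nonneg_left hpbig (le_of_lt hε)]
    linarith [abs_nonneg (g - Real.log ‖p.1‖)]
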